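/- Let H be a separable complex Hilbert space, C a conjugation on H, and let T = A + iB be C-normal, where A is C-symmetric (A* = CAC) and B is C-skew-symmetric (CB*C = −B). Then T*T = A*A + B*B, TT* = AA* + BB*, the positive operators A*A and B*B commute: (A*A)(B*B) = (B*B)(A*A), and max(‖A‖², ‖B‖²) ≤ ‖T‖² ≤ ‖A‖² + ‖B‖². -/

import Mathlib

open scoped InnerProductSpace
open ContinuousLinearMap TopologicalSpace

/-- A conjugation on a complex Hilbert space: an anti-linear, involutive map
satisfying `⟪C x, C y⟫ = ⟪y, x⟫`. -/
def Conjugation {K : Type*} [NormedAddCommGroup K] [InnerProductSpace ℂ K] (C : K → K) : Prop :=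
  (∀ (a : ℂ) (x y : K), C (a • x + y) = (starRingEnd ℂ) a • C x + C y) ∧
  (∀ x, C (C x) = x) ∧
  (∀ x y : K, ⟪C x, C y⟫_ℂ = ⟪y, x⟫_ℂ)

/-- `T` is `C`-normal: `C T*T C = T T*` (pointwise). -/
def CNormal {K : Type*} [NormedAddCommGroup K] [InnerProductSpace ℂ K] [CompleteSpace K]
    (C : K → K) (T : K →L[ℂ] K) : Prop :=
  ∀ x, C (adjoint T (T (C x))) = T (adjoint T x)

set_option maxHeartbeats 1000000 in
/-- For a `C`-normal operator `T = A + iB` (`A` `C`-symmetric, `B` `C`-skew-symmetric):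
`T*T = A*A + B*B`, `TT* = AA* + BB*`, the positive operators `A*A` and `B*B` commute,
and `max(‖A‖², ‖B‖²) ≤ ‖T‖² ≤ ‖A‖² + ‖B‖²`. -/
theorem stmt_13 {H : Type*} [NormedAddCommGroup H] [InnerProductSpace ℂ H] [CompleteSpace H]
    [SeparableSpace H]
    (C : H → H) (hC : Conjugation C)
    (A B : H →L[ℂ] H)
    (hA : ∀ x, adjoint A x = C (A (C x)))
    (hB : ∀ x, C (adjoint B (C x)) = -(B x))
    (hT : CNormal C (A + Complex.I • B)) :
    adjoint (A + Complex.I • B) * (A + Complex.I • B) = adjoint A * A + adjoint B * B ∧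
    (A + Complex.I • B) * adjoint (A + Complex.I • B) = A * adjoint A + B * adjoint B ∧
    (adjoint A * A) * (adjoint B * B) = (adjoint B * B) * (adjoint A * A) ∧
    max (‖A‖ ^ 2) (‖B‖ ^ 2) ≤ ‖A + Complex.I • B‖ ^ 2 ∧
    ‖A + Complex.I • B‖ ^ 2 ≤ ‖A‖ ^ 2 + ‖B‖ ^ 2 := by
  obtain ⟨hCa, hCi, hCin⟩ := hC
  -- basic properties of C
  have hC0 : C 0 = 0 := by
    have h := hCa 1 0 0
    simp at h
    exact h
  have hCadd : ∀ x y : H, C (x + y) = C x + C y := by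
    intro x y; simpa using hCa 1 x y
  have hCs : ∀ (a : ℂ) (x : H), C (a • x) = (starRingEnd ℂ) a • C x := by
    intro a x; simpa [hC0] using hCa a x 0
  have hCneg : ∀ x : H, C (-x) = -C x := by
    intro x; simpa using hCs (-1) x
  -- pointwise relations for A, B
  have hA2 : ∀ x, A (C x) = C (adjoint A x) := by
    intro x; rw [hA, hCi]
  have hA3 : ∀ x, adjoint A (C x) = C (A x) := by
    intro x; rw [hA, hCi]
  have hB2 : ∀ x, adjoint B (C x) = -C (B x) := by
    intro x
    have h := congrArg C (hB x)
    rw [hCi, hCneg] at h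
    exact h
  have hB3 : ∀ x, B (C x) = -C (adjoint B x) := by
    intro x
    have h := hB2 (C x)
    rw [hCi] at h
    have h2 := congrArg C h
    rw [hCneg, hCi] at h2
    rw [h2, neg_neg]
  set T : H →L[ℂ] H := A + Complex.I • B with hTdef
  have hTadj : adjoint T = adjoint A + (-Complex.I) • adjoint B := by
    rw [hTdef, map_add, LinearIsometryEquiv.map_smulₛₗ]
    simp [Complex.conj_I]
  -- T (C x) = C ((A* + i B*) x)
  have hTC : ∀ x, T (C x) = C ((adjoint A + Complex.I • adjoint B) x) := by
    intro x
    simp only [hTdef, ContinuousLinearMap.add_apply, ContinuousLinearMap.smul_apply,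
      hCadd, hCs, hA2, hB3, Complex.conj_I, smul_neg, neg_smul, neg_neg]
  -- T* (C x) = C ((A - i B) x)
  have hTadjC : ∀ x, adjoint T (C x) = C ((A - Complex.I • B) x) := by
    intro x
    simp only [hTadj, ContinuousLinearMap.add_apply, ContinuousLinearMap.smul_apply,
      ContinuousLinearMap.neg_apply, ContinuousLinearMap.sub_apply, hA3, hB2,
      sub_eq_add_neg, hCadd, hCneg, hCs, Complex.conj_I, smul_neg, neg_smul, neg_neg]
  -- main consequence of C-normality
  have hmain : ∀ x, (A - Complex.I • B) ((adjoint A + Complex.I • adjoint B) x)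
      = T ((adjoint A + (-Complex.I) • adjoint B) x) := by
    intro x
    have h := hT x
    rw [hTC x, hTadjC, hCi, hTadj] at h
    exact h
  -- key commutation relation 1 : A B* = B A*
  have hkey1 : ∀ x, A (adjoint B x) = B (adjoint A x) := by
    intro x
    have h := hmain x
    simp only [hTdef, ContinuousLinearMap.add_apply, ContinuousLinearMap.sub_apply,
      ContinuousLinearMap.smul_apply, ContinuousLinearMap.neg_apply, map_add, map_smul,
      map_neg] at h
    have h2 : (2 * Complex.I) • (A (adjoint B x) - B (adjoint A x)) = 0 := by
      linear_combination (norm := module) h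
    rcases smul_eq_zero.mp h2 with h3 | h3
    · exfalso
      simpa [Complex.ext_iff] using h3
    · exact sub_eq_zero.mp h3
  -- key commutation relation 2 : A* B = B* A
  have hkey2 : ∀ x, adjoint A (B x) = adjoint B (A x) := by
    intro x
    have h := hkey1 (C x)
    rw [hB2, hA3, map_neg, hA2, hB3] at h
    have h2 := congrArg C (neg_injective h)
    rwa [hCi, hCi] at h2
  -- first claim
  have c1 : adjoint T * T = adjoint A * A + adjoint B * B := by
    ext x
    rw [hTadj]
    simp only [ContinuousLinearMap.mul_apply, ContinuousLinearMap.add_apply, hTadj, hTdef,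
      ContinuousLinearMap.smul_apply, ContinuousLinearMap.neg_apply, map_add, map_smul, hkey2]
    match_scalars <;> simp [Complex.I_mul_I]
  have c2 : T * adjoint T = A * adjoint A + B * adjoint B := by
    ext x
    rw [hTadj]
    simp only [ContinuousLinearMap.mul_apply, ContinuousLinearMap.add_apply, hTadj, hTdef,
      ContinuousLinearMap.smul_apply, ContinuousLinearMap.neg_apply, map_add, map_smul, hkey1]
    match_scalars <;> simp [Complex.I_mul_I]
  have c3 : (adjoint A * A) * (adjoint B * B) = (adjoint B * B) * (adjoint A * A) := by
    ext x
    simp only [ContinuousLinearMap.mul_apply]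
    rw [hkey1 (B x), hkey2 (adjoint A (B x)), ← hkey1 (A x), ← hkey2 x]
  -- norm identity
  have hnorm : ∀ x, ‖T x‖ ^ 2 = ‖A x‖ ^ 2 + ‖B x‖ ^ 2 := by
    intro x
    have h : adjoint T (T x) = adjoint A (A x) + adjoint B (B x) := by
      have := congrArg (fun S : H →L[ℂ] H => S x) c1
      simpa [ContinuousLinearMap.mul_apply, ContinuousLinearMap.add_apply] using this
    have h2 : ⟪T x, T x⟫_ℂ = ⟪A x, A x⟫_ℂ + ⟪B x, B x⟫_ℂ := by
      rw [← adjoint_inner_right T, h, inner_add_right, adjoint_inner_right,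
        adjoint_inner_right]
    rw [inner_self_eq_norm_sq_to_K, inner_self_eq_norm_sq_to_K,
      inner_self_eq_norm_sq_to_K] at h2
    exact_mod_cast h2
  have lowA : ‖A‖ ≤ ‖T‖ := by
    refine opNorm_le_bound _ (norm_nonneg T) fun x => ?_
    have h1 : ‖A x‖ ≤ ‖T x‖ := by
      nlinarith [hnorm x, sq_nonneg ‖B x‖, norm_nonneg (A x), norm_nonneg (T x)]
    exact h1.trans (T.le_opNorm x)
  have lowB : ‖B‖ ≤ ‖T‖ := by
    refine opNorm_le_bound _ (norm_nonneg T) fun x => ?_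
    have h1 : ‖B x‖ ≤ ‖T x‖ := by
      nlinarith [hnorm x, sq_nonneg ‖A x‖, norm_nonneg (B x), norm_nonneg (T x)]
    exact h1.trans (T.le_opNorm x)
  have hup : ‖T‖ ^ 2 ≤ ‖A‖ ^ 2 + ‖B‖ ^ 2 := by
    have hT2 : ‖T‖ ^ 2 = ‖adjoint A * A + adjoint B * B‖ := by
      rw [← c1, sq, ← norm_adjoint_comp_self]
      rfl
    have hA2' : ‖adjoint A * A‖ = ‖A‖ ^ 2 := by
      rw [sq, ← norm_adjoint_comp_self]; rfl
    have hB2' : ‖adjoint B * B‖ = ‖B‖ ^ 2 := by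
      rw [sq, ← norm_adjoint_comp_self]; rfl
    calc ‖T‖ ^ 2 = ‖adjoint A * A + adjoint B * B‖ := hT2
      _ ≤ ‖adjoint A * A‖ + ‖adjoint B * B‖ := norm_add_le _ _
      _ = ‖A‖ ^ 2 + ‖B‖ ^ 2 := by rw [hA2', hB2']
  refine ⟨c1, c2, c3, ?_, hup⟩
  exact max_le (pow_le_pow_left₀ (norm_nonneg A) lowA 2)
    (pow_le_pow_left₀ (norm_nonneg B) lowB 2)
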